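/- For m, n positive integers, σ², σ*² > 0 with k := σ*²/σ², α ≠ 0 and λ₀ = 0, the inequality Var(f_BE) ≤ Var(f_GE), i.e. (m·σ² + n·α²·σ*²)/(m + nα²)² ≤ (m·σ² + n·σ*²/α²)/(m+n)², holds if and only if k·(m(α²+1) + 2nα²) ≤ α²·(n(α²+1) + 2m). -/

import Mathlib

/-- Bayesian (λ₀ = 0) vs greedy variance comparison: for α² > 1,
`Var(f_BE) ≤ Var(f_GE)` iff `k·(m(α²+1) + 2nα²) ≤ α²·(n(α²+1) + 2m)`
where `k = σ*²/σ²`. -/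
theorem stmt_12 (m n : ℕ) (hm : 0 < m) (hn : 0 < n)
    (σ2 σs2 α k : ℝ) (hσ2 : 0 < σ2) (hσs2 : 0 < σs2)
    (hk : k = σs2 / σ2) (hα : 1 < α ^ 2) :
    ((m : ℝ) * σ2 + n * α ^ 2 * σs2) / ((m : ℝ) + n * α ^ 2) ^ 2 ≤
      ((m : ℝ) * σ2 + n * σs2 / α ^ 2) / ((m : ℝ) + n) ^ 2 ↔
      k * ((m : ℝ) * (α ^ 2 + 1) + 2 * n * α ^ 2) ≤
        α ^ 2 * ((n : ℝ) * (α ^ 2 + 1) + 2 * m) := by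
  have ha : (0:ℝ) < α ^ 2 := by linarith
  have ha' : α ^ 2 ≠ 0 := ne_of_gt ha
  have hm' : (0:ℝ) < m := by exact_mod_cast hm
  have hn' : (0:ℝ) < n := by exact_mod_cast hn
  have h1 : (0:ℝ) < ((m:ℝ) + n * α ^ 2) ^ 2 := by positivity
  have h2 : (0:ℝ) < ((m:ℝ) + n) ^ 2 := by positivity
  have key : ((m:ℝ) * σ2 + n * σs2 / α ^ 2) * ((m:ℝ) + n * α ^ 2) ^ 2 -
      ((m:ℝ) * σ2 + n * α ^ 2 * σs2) * ((m:ℝ) + n) ^ 2 =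
      ((m:ℝ) * n * (α ^ 2 - 1) / α ^ 2) *
        (α ^ 2 * σ2 * ((n:ℝ) * (α ^ 2 + 1) + 2 * m) -
         σs2 * ((m:ℝ) * (α ^ 2 + 1) + 2 * n * α ^ 2)) := by
    have hα0 : α ≠ 0 := by rintro rfl; simp at ha'
    field_simp
    ring
  have hc : (0:ℝ) < (m:ℝ) * n * (α ^ 2 - 1) / α ^ 2 := by
    apply div_pos _ ha
    have : (0:ℝ) < α ^ 2 - 1 := by linarith
    positivity
  rw [hk, div_le_div_iff₀ h1 h2, div_mul_eq_mul_div, div_le_iff₀ hσ2]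
  constructor <;> intro h <;> nlinarith [mul_pos hc hσ2, hc, key]
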